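/- Let √3/2 ≤ λ ≤ 2√2/3 and let T be a non-obtuse Euclidean triangle with all side lengths at least 2 and at least two altitudes of length at least 2λ. Then the circumradius of T is at least √(2 − 2√(1−λ²)) / λ, with equality if and only if T is congruent to the isosceles triangle with two sides of length 2 and base of length 2·√(2 − 2√(1−λ²)). -/

import Mathlib

open Real Metric
open EuclideanGeometry
open scoped RealInnerProductSpace
set_option maxHeartbeats 1000000
set_option maxHeartbeats 1000000
open scoped RealInnerProductSpace

lemma alt_le {V P : Type*} [NormedAddCommGroup V] [InnerProductSpace ℝ V] [MetricSpace P]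
    [NormedAddTorsor V P] {S : Set P} {A B : P}
    (hA : A ∈ affineSpan ℝ S) (hB : B ∈ affineSpan ℝ S) (p : P) :
    infDist p (affineSpan ℝ S : Set P) ≤ dist p A * Real.sin (∠ p A B) := by
  set u : V := p -ᵥ A with hu
  set v : V := B -ᵥ A with hv
  by_cases hv0 : v = 0
  · have : (∠ p A B) = InnerProductGeometry.angle u v := rfl
    rw [this, hv0, InnerProductGeometry.angle_zero_right, Real.sin_pi_div_two, mul_one]
    exact infDist_le_dist_of_mem hA
  · set c : ℝ := (inner ℝ u v : ℝ) / (inner ℝ v v : ℝ) with hc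
    have hQmem : c • (B -ᵥ A) +ᵥ A ∈ affineSpan ℝ S :=
      AffineSubspace.smul_vsub_vadd_mem _ c hB hA hA
    have h1 : infDist p (affineSpan ℝ S : Set P) ≤ dist p (c • (B -ᵥ A) +ᵥ A) :=
      infDist_le_dist_of_mem hQmem
    have hvv : (0:ℝ) < (inner ℝ v v : ℝ) := by
      rw [real_inner_self_eq_norm_sq]; exact pow_pos (norm_pos_iff.mpr hv0) 2
    have h2 : dist p (c • (B -ᵥ A) +ᵥ A) = ‖u - c • v‖ := by
      rw [dist_eq_norm_vsub V, vsub_vadd_eq_vsub_sub]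
    have hda : dist p A = ‖u‖ := dist_eq_norm_vsub V p A
    have hang : (∠ p A B) = InnerProductGeometry.angle u v := rfl
    have hsin := InnerProductGeometry.sin_angle_mul_norm_mul_norm u v
    have hnormsq : (‖u - c • v‖ * ‖v‖)^2 = (inner ℝ u u : ℝ) * (inner ℝ v v : ℝ) - (inner ℝ u v : ℝ) * (inner ℝ u v : ℝ) := by
      rw [mul_pow, ← real_inner_self_eq_norm_sq, ← real_inner_self_eq_norm_sq]
      simp only [inner_sub_left, inner_sub_right, real_inner_smul_left,
        real_inner_smul_right, real_inner_comm v u, hc]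
      field_simp
      ring
    have h3 : ‖u - c • v‖ * ‖v‖ = Real.sqrt ((inner ℝ u u : ℝ) * (inner ℝ v v : ℝ) - (inner ℝ u v : ℝ) * (inner ℝ u v : ℝ)) := by
      rw [← hnormsq, Real.sqrt_sq (by positivity)]
    have hv' : (0:ℝ) < ‖v‖ := norm_pos_iff.mpr hv0
    have h4 : ‖u - c • v‖ = Real.sin (InnerProductGeometry.angle u v) * ‖u‖ := by
      have h5 : Real.sin (InnerProductGeometry.angle u v) * (‖u‖ * ‖v‖) = ‖u - c • v‖ * ‖v‖ :=
        hsin.trans h3.symm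
      have hvn : (0:ℝ) < ‖v‖ := norm_pos_iff.mpr hv0
      nlinarith [h5]
    calc infDist p (affineSpan ℝ S : Set P) ≤ ‖u - c • v‖ := h2 ▸ h1
      _ = dist p A * Real.sin (∠ p A B) := by rw [h4, hda, hang]; ring

lemma key_ineq (l r b c t sn : ℝ)
    (hl34 : 3/4 ≤ l^2) (hl89 : l^2 ≤ 8/9) (hl0 : 0 < l)
    (hr0 : 0 ≤ r) (hr2 : r^2 = 1 - l^2)
    (hb : 2 ≤ b) (hc : 2 ≤ c) (hst : sn^2 + t^2 = 1) (hs : 0 < sn)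
    (hbs : 2*l ≤ b*sn) (hcs : 2*l ≤ c*sn) :
    4*(2-2*r)*sn^2 ≤ l^2*(b^2+c^2-2*b*c*t) ∧
    (4*(2-2*r)*sn^2 = l^2*(b^2+c^2-2*b*c*t) → b = 2 ∧ c = 2 ∧ t = r) := by
  have hr13 : 1/3 ≤ r := by nlinarith
  have hr12 : r ≤ 1/2 := by nlinarith
  have ht1 : t^2 < 1 := by nlinarith
  have hsn1 : sn ≤ 1 := by nlinarith
  have hb0 : (0:ℝ) < b := by linarith
  have hc0 : (0:ℝ) < c := by linarith
  rcases lt_or_ge t 0 with ht | ht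
  · -- t < 0 : strict
    have hbc : 0 < b*c*(-t) := mul_pos (mul_pos hb0 hc0) (by linarith)
    have h1 : (2-2*r)*sn^2 ≤ 4/3 := by nlinarith
    have hlt : 4*(2-2*r)*sn^2 < l^2*(b^2+c^2-2*b*c*t) := by nlinarith
    exact ⟨hlt.le, fun heq => absurd heq hlt.ne⟩
  · rcases le_or_gt l sn with hls | hls
    · -- main case: b,c ≥ 2 binding
      have htr : t ≤ r := by nlinarith
      have ht12 : t ≤ 1/2 := le_trans htr hr12
      have hid : l^2*(b^2+c^2-2*b*c*t) - 4*(2-2*r)*sn^2 =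
          l^2*(b-c)^2 + 2*l^2*(b*c-4)*(1-t) + 8*(1-t)*(1-r)*(r-t) := by
        linear_combination (-(4:ℝ)*(2-2*r))*hst + 8*(1-t)*hr2
      have h1 : 0 ≤ l^2*(b-c)^2 := by positivity
      have h2 : 0 ≤ 2*l^2*(b*c-4)*(1-t) := by
        have h4bc : (2:ℝ)*2 ≤ b*c := mul_le_mul hb hc (by norm_num) (by linarith)
        have : 0 ≤ b*c - 4 := by linarith
        have ht' : 0 ≤ 1 - t := by linarith
        positivity
      have h3 : 0 ≤ 8*(1-t)*(1-r)*(r-t) := by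
        have ht' : 0 ≤ 1 - t := by linarith
        have hr' : 0 ≤ 1 - r := by linarith
        have : 0 ≤ r - t := by linarith
        positivity
      constructor
      · linarith
      · intro heq
        have hz1 : l^2*(b-c)^2 = 0 := by linarith
        have hz2 : 2*l^2*(b*c-4)*(1-t) = 0 := by linarith
        have hz3 : 8*(1-t)*(1-r)*(r-t) = 0 := by linarith
        have hl2 : 0 < l^2 := by positivity
        have hbceq : b = c := by
          have : (b-c)^2 = 0 := by
            rcases mul_eq_zero.mp hz1 with h | h
            · exact absurd h hl2.ne'
            · exact h
          have := pow_eq_zero_iff (n := 2) (by norm_num) |>.mp this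
          linarith
        have ht1' : (0:ℝ) < 1 - t := by linarith
        have hbc4 : b*c = 4 := by
          by_contra hne
          have : 0 < 2*l^2*(b*c-4)*(1-t) := by
            have hbc4' : (2:ℝ)*2 ≤ b*c := mul_le_mul hb hc (by norm_num) (by linarith)
            have : 0 < b*c - 4 := lt_of_le_of_ne (by linarith) (fun h => hne (by linarith))
            positivity
          linarith
        have hbeq : b = 2 := by nlinarith
        have hteq : t = r := by
          by_contra hne
          have : 0 < 8*(1-t)*(1-r)*(r-t) := by
            have : 0 < r - t := lt_of_le_of_ne (by linarith) (fun h => hne (by linarith))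
            have : (0:ℝ) < 1 - r := by linarith
            positivity
          linarith
        exact ⟨hbeq, by nlinarith, hteq⟩
    · -- sn < l : strict
      have htr : r < t := by nlinarith [sq_nonneg (t-r), sq_nonneg (t+r)]
      have ht1' : t < 1 := by nlinarith
      have hphikey : (1-r)*(1+r)^2 - (1-t)*(1+t)^2 = (t-r)*(r+t+r^2+r*t+t^2-1) := by ring
      have hpos : 0 < (t-r)*(r+t+r^2+r*t+t^2-1) := by
        have h1 : 0 < t - r := by linarith
        have h2 : 0 < r+t+r^2+r*t+t^2-1 := by nlinarith
        positivity
      have hphi : (1-t)*(1+t)^2 < (1-r)*(1+r)^2 := by linarith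
      have h1 : 4*l^2 ≤ b*c*sn^2 := by nlinarith [mul_le_mul hbs hcs (by positivity) (by positivity)]
      have h2 : 2*b*c*(1-t) ≤ b^2+c^2-2*b*c*t := by nlinarith [sq_nonneg (b-c)]
      have e1 : l^2*sn^2*(2*b*c*(1-t)) ≤ l^2*sn^2*(b^2+c^2-2*b*c*t) := by
        apply mul_le_mul_of_nonneg_left h2 (by positivity)
      have e2 : 2*l^2*(1-t)*(4*l^2) ≤ 2*l^2*(1-t)*(b*c*sn^2) := by
        apply mul_le_mul_of_nonneg_left h1 (mul_nonneg (by positivity) (by linarith))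
      have hD : 8*(l^2)^2*(1-t) ≤ l^2*(b^2+c^2-2*b*c*t)*sn^2 := by nlinarith [e1, e2]
      have hl2r : l^2 = 1 - r^2 := by linarith
      have hsn2 : sn^2 = 1 - t^2 := by linarith
      have hB : 4*(2-2*r)*sn^2*sn^2 < 8*(l^2)^2*(1-t) := by
        rw [hl2r, hsn2]
        have hfac : 0 < 8*(1-r)*(1-t) :=
          mul_pos (mul_pos (by norm_num) (by linarith)) (by linarith)
        nlinarith [mul_lt_mul_of_pos_left hphi hfac]
      have hlt : 4*(2-2*r)*sn^2 < l^2*(b^2+c^2-2*b*c*t) := by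
        by_contra h
        push_neg at h
        have := mul_le_mul_of_nonneg_right h (sq_nonneg sn)
        nlinarith
      exact ⟨hlt.le, fun heq => absurd heq hlt.ne⟩

lemma abs_angle_sin {V P : Type*} [NormedAddCommGroup V] [InnerProductSpace ℝ V] [MetricSpace P]
    [NormedAddTorsor V P] [hd2 : Fact (Module.finrank ℝ V = 2)] [Module.Oriented ℝ V (Fin 2)]
    {p₁ p₂ p₃ : P} (h1 : p₁ ≠ p₂) (h3 : p₃ ≠ p₂) :
    |Real.Angle.sin (∡ p₁ p₂ p₃)| = Real.sin (∠ p₁ p₂ p₃) := by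
  rw [EuclideanGeometry.angle_eq_abs_oangle_toReal h1 h3]
  set x := (∡ p₁ p₂ p₃).toReal with hx
  have hx1 : -π < x := Real.Angle.neg_pi_lt_toReal _
  have hx2 : x ≤ π := Real.Angle.toReal_le_pi _
  have hcoe : Real.Angle.sin (∡ p₁ p₂ p₃) = Real.sin x := by
    conv_lhs => rw [← Real.Angle.coe_toReal (∡ p₁ p₂ p₃)]
    rw [Real.Angle.sin_coe]
  rw [hcoe]
  rcases le_or_gt 0 x with h | h
  · rw [abs_of_nonneg (Real.sin_nonneg_of_nonneg_of_le_pi h hx2), abs_of_nonneg h]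
  · have hsn : Real.sin x ≤ 0 := by
      have : Real.sin (-x) ≥ 0 := Real.sin_nonneg_of_nonneg_of_le_pi (by linarith) (by linarith)
      rw [Real.sin_neg] at this; linarith
    rw [abs_of_nonpos hsn, abs_of_neg h, Real.sin_neg]


/-- For `√3/2 ≤ λ ≤ 2√2/3`: a non-obtuse triangle (one containing its circumcenter)
with side lengths at least `2` and at least two altitudes of length at least `2λ` has
circumradius at least `√(2−2√(1−λ²))/λ`, with equality iff the triangle is congruent to
the isosceles triangle with two sides of length `2` and base `2√(2−2√(1−λ²))`. -/
theorem stmt10 (l : ℝ) (hl0 : Real.sqrt 3 / 2 ≤ l) (hl : l ≤ 2 * Real.sqrt 2 / 3)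
    (s : Affine.Simplex ℝ (EuclideanSpace ℝ (Fin 2)) 2)
    (hcc : s.circumcenter ∈ convexHull ℝ (Set.range s.points))
    (hside : ∀ i j : Fin 3, i ≠ j → 2 ≤ dist (s.points i) (s.points j))
    (halt : ∃ i j : Fin 3, i ≠ j ∧
      2 * l ≤ infDist (s.points i) (affineSpan ℝ (s.points '' {i}ᶜ) : Set (EuclideanSpace ℝ (Fin 2))) ∧
      2 * l ≤ infDist (s.points j) (affineSpan ℝ (s.points '' {j}ᶜ) : Set (EuclideanSpace ℝ (Fin 2)))) :
    Real.sqrt (2 - 2 * Real.sqrt (1 - l ^ 2)) / l ≤ s.circumradius ∧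
    (s.circumradius = Real.sqrt (2 - 2 * Real.sqrt (1 - l ^ 2)) / l ↔
      ∃ i j k : Fin 3, i ≠ j ∧ i ≠ k ∧ j ≠ k ∧
        dist (s.points i) (s.points j) = 2 ∧
        dist (s.points i) (s.points k) = 2 ∧
        dist (s.points j) (s.points k) = 2 * Real.sqrt (2 - 2 * Real.sqrt (1 - l ^ 2))) := by
  haveI : Fact (Module.finrank ℝ (EuclideanSpace ℝ (Fin 2)) = 2) := ⟨finrank_euclideanSpace_fin⟩
  haveI : Module.Oriented ℝ (EuclideanSpace ℝ (Fin 2)) (Fin 2) :=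
    ⟨Module.Basis.orientation (EuclideanSpace.basisFun (Fin 2) ℝ).toBasis⟩
  have h3 : Real.sqrt 3 ^ 2 = 3 := Real.sq_sqrt (by norm_num)
  have h2 : Real.sqrt 2 ^ 2 = 2 := Real.sq_sqrt (by norm_num)
  have hl0' : (0:ℝ) < l := lt_of_lt_of_le (by positivity) hl0
  have hl34 : 3/4 ≤ l^2 := by nlinarith only [h3, hl0, Real.sqrt_nonneg 3]
  have hl89 : l^2 ≤ 8/9 := by nlinarith only [h2, hl, hl0', Real.sqrt_nonneg 2]
  set r := Real.sqrt (1 - l ^ 2) with hrdef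
  have hr0 : 0 ≤ r := Real.sqrt_nonneg _
  have hr2 : r^2 = 1 - l^2 := Real.sq_sqrt (by linarith only [hl89])
  have hr12 : r ≤ 1/2 := by nlinarith only [hr2, hr0, hl34]
  have hr13 : 1/3 ≤ r := by nlinarith only [hr2, hr0, hl89]
  set m := Real.sqrt (2 - 2 * r) with hmdef
  have hm0 : 0 ≤ m := Real.sqrt_nonneg _
  have hm2 : m^2 = 2 - 2*r := Real.sq_sqrt (by linarith)
  have hm1 : 1 ≤ m := by nlinarith only [hm2, hm0, hr12]
  obtain ⟨i, j, hij, hi, hj⟩ := halt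
  obtain ⟨k, hki, hkj⟩ : ∃ k : Fin 3, k ≠ i ∧ k ≠ j := by
    have : ∀ i j : Fin 3, i ≠ j → ∃ k : Fin 3, k ≠ i ∧ k ≠ j := by decide
    exact this i j hij
  set p := s.points with hp
  have hb2 : 2 ≤ dist (p i) (p k) := hside i k (Ne.symm hki)
  have hc2 : 2 ≤ dist (p j) (p k) := hside j k (Ne.symm hkj)
  have ha2 : 2 ≤ dist (p i) (p j) := hside i j hij
  set b := dist (p i) (p k) with hbdef
  set c := dist (p j) (p k) with hcdef
  set a := dist (p i) (p j) with hadef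
  set sn := Real.sin (∠ (p i) (p k) (p j)) with hsndef
  set t := Real.cos (∠ (p i) (p k) (p j)) with htdef
  -- altitude bounds
  have hAk : p k ∈ affineSpan ℝ (p '' {i}ᶜ) :=
    subset_affineSpan ℝ _ ⟨k, by simpa using hki, rfl⟩
  have hBj : p j ∈ affineSpan ℝ (p '' {i}ᶜ) :=
    subset_affineSpan ℝ _ ⟨j, by simpa using hij.symm, rfl⟩
  have hAk' : p k ∈ affineSpan ℝ (p '' {j}ᶜ) :=
    subset_affineSpan ℝ _ ⟨k, by simpa using hkj, rfl⟩
  have hBi : p i ∈ affineSpan ℝ (p '' {j}ᶜ) :=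
    subset_affineSpan ℝ _ ⟨i, by simpa using hij, rfl⟩
  have hbs : 2*l ≤ b * sn := le_trans hi (alt_le hAk hBj (p i))
  have hcs : 2*l ≤ c * sn := by
    have := le_trans hj (alt_le hAk' hBi (p j))
    rwa [EuclideanGeometry.angle_comm (p j) (p k) (p i)] at this
  have hst : sn^2 + t^2 = 1 := Real.sin_sq_add_cos_sq _
  have hs0 : 0 < sn := by nlinarith only [hbs, hb2, hl0']
  -- law of cosines
  have hlcos := EuclideanGeometry.law_cos (p i) (p k) (p j)
  have ha2eq : a^2 = b^2 + c^2 - 2*b*c*t := by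
    rw [hadef, hbdef, hcdef]; rw [pow_two, pow_two, pow_two]; exact hlcos
  -- law of sines
  have hpik : p i ≠ p k := by
    intro h; rw [hbdef, h, dist_self] at hb2; linarith
  have hpjk : p j ≠ p k := by
    intro h; rw [hcdef, h, dist_self] at hc2; linarith
  have hR : a / sn / 2 = s.circumradius := by
    have hLS := Affine.Triangle.dist_div_sin_oangle_div_two_eq_circumradius s
      (i₁ := i) (i₂ := k) (i₃ := j) (Ne.symm hki) hij (Ne.symm hkj).symm
    rwa [abs_angle_sin hpik hpjk] at hLS
  -- key inequality
  obtain ⟨hkey1, hkey2⟩ := key_ineq l r b c t sn hl34 hl89 hl0' hr0 hr2 hb2 hc2 hst hs0 hbs hcs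
  have hkey1' : 4*m^2*sn^2 ≤ l^2*a^2 := by rw [hm2, ha2eq]; linarith
  have ha0 : 0 < a := by linarith
  have hmain : m / l ≤ s.circumradius := by
    rw [← hR, div_div, div_le_div_iff₀ hl0' (by positivity)]
    by_contra h
    push_neg at h
    have hx : (0:ℝ) < m*(sn*2) + a*l :=
      add_pos (mul_pos (lt_of_lt_of_le one_pos hm1) (by linarith only [hs0]))
        (mul_pos ha0 hl0')
    nlinarith only [mul_pos (sub_pos.mpr h) hx, hkey1']
  refine ⟨hmain, ?_, ?_⟩
  · intro heq
    have haml : a * l = m * (sn * 2) := by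
      rw [← hR] at heq
      field_simp [hs0.ne', hl0'.ne'] at heq
      linear_combination heq
    have heq2 : 4*(2-2*r)*sn^2 = l^2*(b^2+c^2-2*b*c*t) := by
      rw [← ha2eq, ← hm2]
      linear_combination (-(a*l + m*(sn*2))) * haml
    obtain ⟨hbeq, hceq, hteq⟩ := hkey2 heq2
    have ha4 : a^2 = (2*m)^2 := by
      rw [ha2eq, hbeq, hceq, hteq]
      linear_combination (-4 : ℝ) * hm2
    have haeq : a = 2*m := by
      have h1 := Real.sqrt_sq ha0.le
      have h2' := Real.sqrt_sq (show (0:ℝ) ≤ 2*m by linarith only [hm1])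
      rw [← h1, ha4, h2']
    exact ⟨k, i, j, hki, hkj, hij, by rw [dist_comm]; exact hbeq, by rw [dist_comm]; exact hceq, haeq⟩
  · rintro ⟨i', j', k', hij', hik', hjk', d1, d2, d3⟩
    have hq1 : dist (p j') (p i') = 2 := by rw [dist_comm]; exact d1
    have hq2 : dist (p k') (p i') = 2 := by rw [dist_comm]; exact d2
    have hlcos' := EuclideanGeometry.law_cos (p j') (p i') (p k')
    rw [hq1, hq2, d3] at hlcos'
    have hcos' : Real.cos (∠ (p j') (p i') (p k')) = r := by
      linear_combination (1/8 : ℝ) * hlcos' + (-(1/2) : ℝ) * hm2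
    have hsin' : Real.sin (∠ (p j') (p i') (p k')) = l := by
      rw [Real.sin_eq_sqrt_one_sub_cos_sq (EuclideanGeometry.angle_nonneg _ _ _)
        (EuclideanGeometry.angle_le_pi _ _ _), hcos']
      rw [show 1 - r^2 = l^2 by linarith]
      exact Real.sqrt_sq hl0'.le
    have hpji : p j' ≠ p i' := by
      intro h; rw [h, dist_self] at hq1; norm_num at hq1
    have hpki : p k' ≠ p i' := by
      intro h; rw [h, dist_self] at hq2; norm_num at hq2
    have hLS := Affine.Triangle.dist_div_sin_oangle_div_two_eq_circumradius s
      (i₁ := j') (i₂ := i') (i₃ := k') (Ne.symm hij') hjk' hik'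
    rw [abs_angle_sin hpji hpki, hsin', d3] at hLS
    rw [← hLS]
    field_simp
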